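/- M_n converges uniformly in probability to M on Θ: sup_{θ ∈ Θ} |M_n(θ) − M(θ)| → 0 in probability as n → ∞. -/

import Mathlib

open MeasureTheory ProbabilityTheory Filter
open Topology

/-- The `N(θ,1)` density `φ(y|θ)`. -/
noncomputable def npdf (y θ : ℝ) : ℝ :=
  Real.exp (-(y - θ) ^ 2 / 2) / Real.sqrt (2 * Real.pi)

/-- `m_θ(y,γ) = log((1−γ)φ(y|0) + γφ(y|θ))`. -/
noncomputable def mFun (θ : ℝ) (p : ℝ × ℝ) : ℝ :=
  Real.log ((1 - p.2) * npdf p.1 0 + p.2 * npdf p.1 θ)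

lemma sqrt2pi_pos : 0 < Real.sqrt (2 * Real.pi) :=
  Real.sqrt_pos.mpr (by positivity)

lemma one_le_sqrt2pi : 1 ≤ Real.sqrt (2 * Real.pi) := by
  rw [show (1:ℝ) = Real.sqrt 1 by simp]
  exact Real.sqrt_le_sqrt (by nlinarith [Real.pi_gt_three])

lemma npdf_pos (y θ : ℝ) : 0 < npdf y θ :=
  div_pos (Real.exp_pos _) sqrt2pi_pos

lemma npdf_le (y θ : ℝ) : npdf y θ ≤ (Real.sqrt (2 * Real.pi))⁻¹ := by
  rw [npdf, div_eq_mul_inv]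
  have h1 : Real.exp (-(y - θ) ^ 2 / 2) ≤ 1 :=
    Real.exp_le_one_iff.mpr (by nlinarith [sq_nonneg (y - θ)])
  nlinarith [inv_pos.mpr sqrt2pi_pos]

lemma npdf_ge {K θ : ℝ} (hθ : |θ| ≤ K) (y : ℝ) :
    Real.exp (-(|y| + K) ^ 2 / 2) / Real.sqrt (2 * Real.pi) ≤ npdf y θ := by
  rw [npdf]
  have h1 : (y - θ) ^ 2 ≤ (|y| + K) ^ 2 := by
    have := abs_sub_abs_le_abs_sub y θ
    have h2 : |y - θ| ≤ |y| + K := (abs_sub y θ).trans (by linarith)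
    nlinarith [abs_nonneg (y - θ), sq_abs (y - θ)]
  exact div_le_div_of_nonneg_right (Real.exp_le_exp.mpr (by linarith)) sqrt2pi_pos.le

/-- the mixture density -/
noncomputable def den (θ : ℝ) (p : ℝ × ℝ) : ℝ :=
  (1 - p.2) * npdf p.1 0 + p.2 * npdf p.1 θ

lemma mFun_eq (θ : ℝ) (p : ℝ × ℝ) : mFun θ p = Real.log (den θ p) := rfl

lemma den_ge {K θ : ℝ} (hK : 0 < K) (hθ : |θ| ≤ K) {p : ℝ × ℝ}
    (hγ : p.2 ∈ Set.Icc (0:ℝ) 1) :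
    Real.exp (-(|p.1| + K) ^ 2 / 2) / Real.sqrt (2 * Real.pi) ≤ den θ p := by
  obtain ⟨h0, h1⟩ := hγ
  have ha := npdf_ge (K := K) (θ := 0) (by simp [abs_of_nonneg, hK.le]) p.1
  have hb := npdf_ge hθ p.1
  have := den θ p
  rw [den]
  nlinarith [Real.exp_pos (-(|p.1| + K) ^ 2 / 2), sqrt2pi_pos]

lemma den_pos {K θ : ℝ} (hK : 0 < K) (hθ : |θ| ≤ K) {p : ℝ × ℝ}
    (hγ : p.2 ∈ Set.Icc (0:ℝ) 1) : 0 < den θ p :=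
  lt_of_lt_of_le (by positivity) (den_ge hK hθ hγ)

lemma den_le {θ : ℝ} {p : ℝ × ℝ} (hγ : p.2 ∈ Set.Icc (0:ℝ) 1) :
    den θ p ≤ (Real.sqrt (2 * Real.pi))⁻¹ := by
  obtain ⟨h0, h1⟩ := hγ
  have ha := npdf_le p.1 0
  have hb := npdf_le p.1 θ
  have hc := npdf_pos p.1 0
  have hd := npdf_pos p.1 θ
  rw [den]
  nlinarith

/-- integrable envelope -/
noncomputable def envB (K y : ℝ) : ℝ :=
  Real.log (Real.sqrt (2 * Real.pi)) + (|y| + K) ^ 2 / 2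

lemma abs_mFun_le {K θ : ℝ} (hK : 0 < K) (hθ : |θ| ≤ K) {p : ℝ × ℝ}
    (hγ : p.2 ∈ Set.Icc (0:ℝ) 1) : |mFun θ p| ≤ envB K p.1 := by
  have hpos := den_pos hK hθ hγ
  have hlogs : 0 ≤ Real.log (Real.sqrt (2 * Real.pi)) :=
    Real.log_nonneg one_le_sqrt2pi
  rw [mFun_eq, abs_le, envB]
  constructor
  · have h1 : Real.log (Real.exp (-(|p.1| + K) ^ 2 / 2) / Real.sqrt (2 * Real.pi))
        ≤ Real.log (den θ p) :=
      Real.log_le_log (by positivity) (den_ge hK hθ hγ)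
    rw [Real.log_div (Real.exp_ne_zero _) sqrt2pi_pos.ne', Real.log_exp] at h1
    have hsq : 0 ≤ (|p.1| + K) ^ 2 := sq_nonneg _
    linarith
  · have h1 : Real.log (den θ p) ≤ Real.log (Real.sqrt (2 * Real.pi))⁻¹ :=
      Real.log_le_log hpos (den_le hγ)
    rw [Real.log_inv] at h1
    have hsq : 0 ≤ (|p.1| + K) ^ 2 := sq_nonneg _
    linarith

lemma hasDerivAt_den (p : ℝ × ℝ) (θ : ℝ) :
    HasDerivAt (fun t => den t p) (p.2 * ((p.1 - θ) * npdf p.1 θ)) θ := by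
  have h1 : HasDerivAt (fun t : ℝ => -(p.1 - t) ^ 2 / 2) (p.1 - θ) θ := by
    have h0 : HasDerivAt (fun t : ℝ => p.1 - t) (-1) θ := by
      simpa using (hasDerivAt_id θ).const_sub p.1
    have := ((h0.pow 2).neg.div_const 2)
    refine this.congr_deriv ?_
    ring
  have h2 : HasDerivAt (fun t => npdf p.1 t)
      ((p.1 - θ) * npdf p.1 θ) θ := by
    have h := (h1.exp).div_const (Real.sqrt (2 * Real.pi))
    simp only [npdf]
    refine h.congr_deriv ?_
    ring
  exact ((h2.const_mul p.2).const_add ((1 - p.2) * npdf p.1 0))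

lemma hasDerivAt_mFun {K : ℝ} (hK : 0 < K) {θ : ℝ} (hθ : |θ| ≤ K) {p : ℝ × ℝ}
    (hγ : p.2 ∈ Set.Icc (0:ℝ) 1) :
    HasDerivAt (fun t => mFun t p)
      (p.2 * ((p.1 - θ) * npdf p.1 θ) / den θ p) θ :=
  (hasDerivAt_den p θ).log (den_pos hK hθ hγ).ne'

lemma deriv_bound {K : ℝ} (hK : 0 < K) {θ : ℝ} (hθ : |θ| ≤ K) {p : ℝ × ℝ}
    (hγ : p.2 ∈ Set.Icc (0:ℝ) 1) :
    |p.2 * ((p.1 - θ) * npdf p.1 θ) / den θ p| ≤ |p.1| + K := by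
  have hpos := den_pos hK hθ hγ
  obtain ⟨h0, h1⟩ := hγ
  have hnp := npdf_pos p.1 θ
  have hnp0 := npdf_pos p.1 0
  have hle : p.2 * npdf p.1 θ ≤ den θ p := by
    rw [den]; nlinarith
  have h2 : p.2 * npdf p.1 θ / den θ p ≤ 1 := (div_le_one hpos).mpr hle
  have h3 : 0 ≤ p.2 * npdf p.1 θ / den θ p := by positivity
  have h4 : |p.1 - θ| ≤ |p.1| + K := (abs_sub p.1 θ).trans (by linarith)
  have heq : p.2 * ((p.1 - θ) * npdf p.1 θ) / den θ p
      = (p.1 - θ) * (p.2 * npdf p.1 θ / den θ p) := by ring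
  rw [heq, abs_mul, abs_of_nonneg h3]
  calc |p.1 - θ| * (p.2 * npdf p.1 θ / den θ p) ≤ (|p.1| + K) * 1 := by
        apply mul_le_mul h4 h2 h3 (by positivity)
    _ = |p.1| + K := mul_one _

lemma mFun_lipschitz {K : ℝ} (hK : 0 < K) {θ θ' : ℝ}
    (hθ : θ ∈ Set.Icc (-K) K) (hθ' : θ' ∈ Set.Icc (-K) K) {p : ℝ × ℝ}
    (hγ : p.2 ∈ Set.Icc (0:ℝ) 1) :
    |mFun θ p - mFun θ' p| ≤ (|p.1| + K) * |θ - θ'| := by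
  have habs : ∀ t ∈ Set.Icc (-K) K, |t| ≤ K := fun t ht => abs_le.mpr ⟨ht.1, ht.2⟩
  have h := Convex.norm_image_sub_le_of_norm_hasDerivWithin_le
    (f := fun t => mFun t p)
    (f' := fun t => p.2 * ((p.1 - t) * npdf p.1 t) / den t p)
    (fun t ht => (hasDerivAt_mFun hK (habs t ht) hγ).hasDerivWithinAt)
    (fun t ht => by
      rw [Real.norm_eq_abs]; exact deriv_bound hK (habs t ht) hγ)
    (convex_Icc _ _) hθ' hθ
  simpa [Real.norm_eq_abs] using h

lemma measurable_mFun (θ : ℝ) : Measurable (mFun θ) := by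
  have hc : Continuous fun p : ℝ × ℝ =>
      (1 - p.2) * npdf p.1 0 + p.2 * npdf p.1 θ := by
    apply Continuous.add
    · exact (continuous_const.sub continuous_snd).mul
        ((((continuous_fst.sub continuous_const).pow 2).neg.div_const 2).rexp.div_const _)
    · exact continuous_snd.mul
        ((((continuous_fst.sub continuous_const).pow 2).neg.div_const 2).rexp.div_const _)
  exact hc.measurable.log

lemma integrable_sq_gauss (K : ℝ) :
    Integrable (fun y : ℝ => (|y| + K) ^ 2) (gaussianReal 0 1) := by
  rw [gaussianReal_of_var_ne_zero 0 one_ne_zero,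
    integrable_withDensity_iff (measurable_gaussianPDF 0 1)
      (Filter.Eventually.of_forall fun x => ENNReal.ofReal_lt_top)]
  have hEq : ∀ x : ℝ, (gaussianPDF 0 1 x).toReal = gaussianPDFReal 0 1 x := fun x =>
    ENNReal.toReal_ofReal (gaussianPDFReal_nonneg 0 1 x)
  simp_rw [hEq]
  have hsq : Integrable (fun x : ℝ => x ^ 2 * Real.exp (-2⁻¹ * x ^ 2)) := by
    have := integrable_rpow_mul_exp_neg_mul_sq (b := 2⁻¹) (by norm_num)
      (s := ((2:ℕ):ℝ)) (by norm_num)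
    simpa [Real.rpow_natCast] using this
  have h0 : Integrable (fun x : ℝ => Real.exp (-2⁻¹ * x ^ 2)) :=
    integrable_exp_neg_mul_sq (by norm_num)
  have hInt : Integrable (fun x : ℝ => (Real.sqrt (2 * Real.pi))⁻¹ *
      (2 * (x ^ 2 * Real.exp (-2⁻¹ * x ^ 2)) + 2 * K ^ 2 * Real.exp (-2⁻¹ * x ^ 2))) :=
    ((hsq.const_mul 2).add (h0.const_mul (2 * K ^ 2))).const_mul _
  apply hInt.mono'
  · apply Continuous.aestronglyMeasurable
    have : Continuous (gaussianPDFReal 0 1) := by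
      unfold gaussianPDFReal
      fun_prop
    exact ((continuous_abs.add continuous_const).pow 2).mul this
  · refine Filter.Eventually.of_forall fun x => ?_
    have hpdf : gaussianPDFReal 0 1 x = (Real.sqrt (2 * Real.pi))⁻¹ *
        Real.exp (-2⁻¹ * x ^ 2) := by
      unfold gaussianPDFReal
      push_cast
      rw [show -(x - 0) ^ 2 / (2 * 1) = -2⁻¹ * x ^ 2 by ring]
      norm_num
    rw [Real.norm_eq_abs,
      abs_of_nonneg (mul_nonneg (by positivity) (gaussianPDFReal_nonneg 0 1 x)), hpdf]
    have h1 : (|x| + K) ^ 2 ≤ 2 * x ^ 2 + 2 * K ^ 2 := by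
      nlinarith [sq_abs x, sq_nonneg (|x| - K)]
    calc (|x| + K) ^ 2 * ((Real.sqrt (2 * Real.pi))⁻¹ * Real.exp (-2⁻¹ * x ^ 2))
        ≤ (2 * x ^ 2 + 2 * K ^ 2) * ((Real.sqrt (2 * Real.pi))⁻¹ * Real.exp (-2⁻¹ * x ^ 2)) :=
          mul_le_mul_of_nonneg_right h1 (by positivity)
      _ = (Real.sqrt (2 * Real.pi))⁻¹ *
          (2 * (x ^ 2 * Real.exp (-2⁻¹ * x ^ 2)) + 2 * K ^ 2 * Real.exp (-2⁻¹ * x ^ 2)) := by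
          ring

lemma integrable_abs_gauss {K : ℝ} (hK : 0 ≤ K) :
    Integrable (fun y : ℝ => |y| + K) (gaussianReal 0 1) := by
  have h := (integrable_sq_gauss K).add (integrable_const (μ := gaussianReal 0 1) (1:ℝ))
  apply h.mono'
  · exact (continuous_abs.add continuous_const).aestronglyMeasurable
  · refine Filter.Eventually.of_forall fun y => ?_
    rw [Real.norm_eq_abs, abs_of_nonneg (by positivity)]
    simp only [Pi.add_apply]
    nlinarith [sq_nonneg (|y| + K - 1), abs_nonneg y]

lemma integrable_envB_gauss (K : ℝ) :
    Integrable (fun y : ℝ => envB K y) (gaussianReal 0 1) := by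
  unfold envB
  exact (integrable_const _).add ((integrable_sq_gauss K).div_const 2)

lemma integrable_comp_fst {f : ℝ → ℝ} (hf : Measurable f)
    (hfi : Integrable f (gaussianReal 0 1)) (G : Measure ℝ) [IsProbabilityMeasure G] :
    Integrable (fun p : ℝ × ℝ => f p.1) ((gaussianReal 0 1).prod G) := by
  have hmap : Measure.map Prod.fst ((gaussianReal 0 1).prod G) = gaussianReal 0 1 :=
    Measure.fst_prod
  have := (integrable_map_measure hf.aestronglyMeasurable
    measurable_fst.aemeasurable (μ := (gaussianReal 0 1).prod G)).mp (by rwa [hmap])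
  exact this

/-- Under the null model, `M_n(θ) = n⁻¹ Σ_{i=1}^n m_θ(Y_i,γ_i)` converges uniformly in
probability to `M(θ) = E[m_θ(Y₁,γ₁)]` over `Θ = [−K,K]`:
`sup_{θ∈Θ} |M_n(θ) − M(θ)| → 0` in probability. -/
theorem stmt14 {Ω : Type*} [MeasurableSpace Ω] (P : Measure Ω) [IsProbabilityMeasure P]
    (G : Measure ℝ) [IsProbabilityMeasure G]
    (hG : ∀ᵐ x ∂G, x ∈ Set.Icc (0 : ℝ) 1)
    (hVar : 0 < (∫ x, x ^ 2 ∂G) - (∫ x, x ∂G) ^ 2)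
    (hlog : Integrable (fun x => -Real.log (1 - x)) G)
    (X : ℕ → Ω → ℝ × ℝ) (hXm : ∀ i, Measurable (X i))
    (hindep : iIndepFun X P)
    (hdist : ∀ i, Measure.map (X i) P = (gaussianReal 0 1).prod G)
    (K : ℝ) (hK : 0 < K)
    (Mn : ℕ → ℝ → Ω → ℝ)
    (hMn : ∀ n θ ω, Mn n θ ω = (∑ i ∈ Finset.range n, mFun θ (X i ω)) / n)
    (M : ℝ → ℝ) (hM : ∀ θ, M θ = ∫ p, mFun θ p ∂((gaussianReal 0 1).prod G)) :
    ∀ ε > 0,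
      Tendsto
        (fun n : ℕ =>
          (P {ω | ε ≤ ⨆ θ : Set.Icc (-K) K, |Mn n θ ω - M θ|}).toReal)
        atTop (nhds 0) := by
  set ν := (gaussianReal 0 1).prod G with hν
  have hIccNe : (Set.Icc (-K) K).Nonempty := Set.nonempty_Icc.mpr (by linarith)
  haveI : Nonempty (Set.Icc (-K) K) := hIccNe.to_subtype
  have habsK : ∀ θ ∈ Set.Icc (-K) K, |θ| ≤ K := fun θ hθ => abs_le.mpr ⟨hθ.1, hθ.2⟩
  -- a.e. the mixture weight is in [0,1]
  have haeγ : ∀ᵐ p ∂ν, p.2 ∈ Set.Icc (0:ℝ) 1 := by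
    have hGc : G {x | x ∉ Set.Icc (0:ℝ) 1} = 0 := hG
    rw [ae_iff]
    have hset : {p : ℝ × ℝ | ¬ p.2 ∈ Set.Icc (0:ℝ) 1}
        = (Set.univ : Set ℝ) ×ˢ {x | x ∉ Set.Icc (0:ℝ) 1} := by
      ext p; simp [Set.mem_prod]
    rw [hset, hν, Measure.prod_prod, hGc, mul_zero]
  -- integrable envelope and Lipschitz weight over ν
  have hmB : Measurable fun y : ℝ => envB K y := by
    unfold envB
    exact (continuous_const.add
      (((continuous_abs.add continuous_const).pow 2).div_const 2)).measurable
  have hBν : Integrable (fun p : ℝ × ℝ => envB K p.1) ν :=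
    integrable_comp_fst hmB (integrable_envB_gauss K) G
  have hcν : Integrable (fun p : ℝ × ℝ => |p.1| + K) ν :=
    integrable_comp_fst (continuous_abs.add continuous_const).measurable
      (integrable_abs_gauss hK.le) G
  set c : ℝ := ∫ p, (|p.1| + K) ∂ν with hc
  have hc0 : 0 ≤ c := integral_nonneg fun p => by positivity
  -- integrability of mFun θ
  have hintθ : ∀ θ ∈ Set.Icc (-K) K, Integrable (mFun θ) ν := fun θ hθ =>
    hBν.mono' (measurable_mFun θ).aestronglyMeasurable
      (haeγ.mono fun p hp => by
        rw [Real.norm_eq_abs]; exact abs_mFun_le hK (habsK θ hθ) hp)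
  -- M is Lipschitz with constant c
  have hMlip : ∀ θ ∈ Set.Icc (-K) K, ∀ θ' ∈ Set.Icc (-K) K,
      |M θ - M θ'| ≤ c * |θ - θ'| := by
    intro θ hθ θ' hθ'
    rw [hM θ, hM θ', ← integral_sub (hintθ θ hθ) (hintθ θ' hθ')]
    have hbd : ∀ᵐ p ∂ν, ‖mFun θ p - mFun θ' p‖ ≤ (|p.1| + K) * |θ - θ'| :=
      haeγ.mono fun p hp => by
        rw [Real.norm_eq_abs]; exact mFun_lipschitz hK hθ hθ' hp
    have h := norm_integral_le_of_norm_le (hcν.mul_const |θ - θ'|) hbd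
    rw [integral_mul_const] at h
    rw [← Real.norm_eq_abs]
    exact h
  -- LLN at a fixed θ
  have hLLN : ∀ θ ∈ Set.Icc (-K) K, ∀ᵐ ω ∂P,
      Tendsto (fun n : ℕ => (∑ i ∈ Finset.range n, mFun θ (X i ω)) / n)
        atTop (𝓝 (M θ)) := by
    intro θ hθ
    have hZint : Integrable (fun ω => mFun θ (X 0 ω)) P :=
      (integrable_map_measure (measurable_mFun θ).aestronglyMeasurable
        (hXm 0).aemeasurable).mp (by rw [hdist 0]; exact hintθ θ hθ)
    have hpair : Pairwise (Function.onFun (fun f g => IndepFun f g P) fun i ω => mFun θ (X i ω)) :=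
      fun i j hij => (hindep.indepFun hij).comp (measurable_mFun θ) (measurable_mFun θ)
    have hident : ∀ i, IdentDistrib (fun ω => mFun θ (X i ω))
        (fun ω => mFun θ (X 0 ω)) P P := by
      intro i
      refine ⟨((measurable_mFun θ).comp (hXm i)).aemeasurable,
        ((measurable_mFun θ).comp (hXm 0)).aemeasurable, ?_⟩
      show Measure.map (mFun θ ∘ X i) P = Measure.map (mFun θ ∘ X 0) P
      rw [← Measure.map_map (measurable_mFun θ) (hXm i),
        ← Measure.map_map (measurable_mFun θ) (hXm 0), hdist i, hdist 0]
    have h := strong_law_ae_real _ hZint hpair hident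
    have hEq : (∫ ω, mFun θ (X 0 ω) ∂P) = M θ := by
      rw [hM θ, ← hdist 0,
        integral_map (hXm 0).aemeasurable (measurable_mFun θ).aestronglyMeasurable]
    rw [hEq] at h
    exact h
  -- LLN for the Lipschitz weights
  have hLLNc : ∀ᵐ ω ∂P,
      Tendsto (fun n : ℕ => (∑ i ∈ Finset.range n, (|(X i ω).1| + K)) / n)
        atTop (𝓝 c) := by
    have hfm : Measurable fun p : ℝ × ℝ => |p.1| + K :=
      ((continuous_abs.comp continuous_fst).add continuous_const).measurable
    have hZint : Integrable (fun ω => |(X 0 ω).1| + K) P :=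
      (integrable_map_measure hfm.aestronglyMeasurable
        (hXm 0).aemeasurable).mp (by rw [hdist 0]; exact hcν)
    have hpair : Pairwise (Function.onFun (fun f g => IndepFun f g P) fun i ω => |(X i ω).1| + K) :=
      fun i j hij => (hindep.indepFun hij).comp hfm hfm
    have hident : ∀ i, IdentDistrib (fun ω => |(X i ω).1| + K)
        (fun ω => |(X 0 ω).1| + K) P P := by
      intro i
      refine ⟨(hfm.comp (hXm i)).aemeasurable, (hfm.comp (hXm 0)).aemeasurable, ?_⟩
      show Measure.map ((fun p : ℝ × ℝ => |p.1| + K) ∘ X i) P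
        = Measure.map ((fun p : ℝ × ℝ => |p.1| + K) ∘ X 0) P
      rw [← Measure.map_map hfm (hXm i), ← Measure.map_map hfm (hXm 0), hdist i, hdist 0]
    have h := strong_law_ae_real _ hZint hpair hident
    have hEq : (∫ ω, (|(X 0 ω).1| + K) ∂P) = c := by
      rw [hc, ← hdist 0,
        integral_map (hXm 0).aemeasurable hfm.aestronglyMeasurable]
    rw [hEq] at h
    exact h
  -- rational grid
  set e : ℚ → ℝ := fun q => max (-K) (min K (q:ℝ)) with he
  have he_mem : ∀ q, e q ∈ Set.Icc (-K) K := fun q =>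
    ⟨le_max_left _ _, max_le (by linarith) (min_le_left _ _)⟩
  have he_close : ∀ θ ∈ Set.Icc (-K) K, ∀ δ : ℝ, 0 < δ → ∃ q : ℚ, |θ - e q| < δ := by
    intro θ hθ δ hδ
    obtain ⟨q, hq1, hq2⟩ := exists_rat_btwn (show θ < θ + δ by linarith)
    refine ⟨q, ?_⟩
    have h1 : -K < (q:ℝ) := lt_of_le_of_lt hθ.1 hq1
    rcases le_total ((q:ℝ)) K with h | h
    · have heq : e q = (q:ℝ) := by
        rw [he]; simp only [min_eq_right h]; exact max_eq_right h1.le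
      rw [heq]
      exact abs_lt.mpr ⟨by linarith, by linarith⟩
    · have heq : e q = K := by
        rw [he]; simp only [min_eq_left h]; exact max_eq_right (by linarith)
      rw [heq]
      have hθ2 := hθ.2
      exact abs_lt.mpr ⟨by linarith, by linarith⟩
  -- finite covers
  have hcov : ∀ δ : ℝ, 0 < δ → ∃ t : Finset ℚ, t.Nonempty ∧
      Set.Icc (-K) K ⊆ ⋃ q ∈ t, Metric.ball (e q) δ := by
    intro δ hδ
    obtain ⟨t, ht⟩ := (isCompact_Icc (a := -K) (b := K)).elim_finite_subcover
      (fun q : ℚ => Metric.ball (e q) δ) (fun q => Metric.isOpen_ball)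
      (by
        intro θ hθ
        obtain ⟨q, hq⟩ := he_close θ hθ δ hδ
        exact Set.mem_iUnion.mpr ⟨q, Metric.mem_ball.mpr (by rw [Real.dist_eq]; exact hq)⟩)
    refine ⟨t, ?_, ht⟩
    obtain ⟨q, hq, -⟩ := Set.mem_iUnion₂.mp (ht ⟨le_refl (-K), by linarith⟩)
    exact ⟨q, hq⟩
  -- key deterministic estimate
  have key : ∀ ω, (∀ i, (X i ω).2 ∈ Set.Icc (0:ℝ) 1) → ∀ n : ℕ, ∀ δ : ℝ, 0 < δ →
      ∀ t : Finset ℚ, ∀ ht : t.Nonempty,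
      Set.Icc (-K) K ⊆ (⋃ q ∈ t, Metric.ball (e q) δ) →
      ∀ θ ∈ Set.Icc (-K) K,
      |Mn n θ ω - M θ| ≤ t.sup' ht (fun q => |Mn n (e q) ω - M (e q)|)
        + ((∑ i ∈ Finset.range n, (|(X i ω).1| + K)) / n + c) * δ := by
    intro ω hγ n δ hδ t ht hcovt θ hθ
    obtain ⟨q, hq, hqb⟩ := Set.mem_iUnion₂.mp (hcovt hθ)
    have hqd : |θ - e q| < δ := by rw [← Real.dist_eq]; exact hqb
    have hLn0 : (0:ℝ) ≤ (∑ i ∈ Finset.range n, (|(X i ω).1| + K)) / n := by positivity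
    have h1 : |Mn n θ ω - Mn n (e q) ω|
        ≤ ((∑ i ∈ Finset.range n, (|(X i ω).1| + K)) / n) * δ := by
      rw [hMn, hMn, div_sub_div_same, ← Finset.sum_sub_distrib, abs_div, Nat.abs_cast]
      have hnum : |∑ i ∈ Finset.range n, (mFun θ (X i ω) - mFun (e q) (X i ω))|
          ≤ (∑ i ∈ Finset.range n, (|(X i ω).1| + K)) * |θ - e q| := by
        rw [Finset.sum_mul]
        exact (Finset.abs_sum_le_sum_abs _ _).trans
          (Finset.sum_le_sum fun i _ => mFun_lipschitz hK hθ (he_mem q) (hγ i))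
      have hn : (0:ℝ) ≤ ((n:ℝ))⁻¹ := by positivity
      calc |∑ i ∈ Finset.range n, (mFun θ (X i ω) - mFun (e q) (X i ω))| / n
          ≤ ((∑ i ∈ Finset.range n, (|(X i ω).1| + K)) * |θ - e q|) / n := by
            rw [div_eq_mul_inv, div_eq_mul_inv]
            exact mul_le_mul_of_nonneg_right hnum hn
        _ = ((∑ i ∈ Finset.range n, (|(X i ω).1| + K)) / n) * |θ - e q| := by ring
        _ ≤ ((∑ i ∈ Finset.range n, (|(X i ω).1| + K)) / n) * δ :=
            mul_le_mul_of_nonneg_left hqd.le hLn0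
    have h2 : |Mn n (e q) ω - M (e q)|
        ≤ t.sup' ht (fun q => |Mn n (e q) ω - M (e q)|) :=
      Finset.le_sup' (fun q => |Mn n (e q) ω - M (e q)|) hq
    have h3 : |M (e q) - M θ| ≤ c * δ := by
      calc |M (e q) - M θ| ≤ c * |e q - θ| := hMlip (e q) (he_mem q) θ hθ
        _ ≤ c * δ := mul_le_mul_of_nonneg_left
            (by rw [abs_sub_comm]; exact hqd.le) hc0
    calc |Mn n θ ω - M θ|
        ≤ |Mn n θ ω - Mn n (e q) ω| + |Mn n (e q) ω - M (e q)| + |M (e q) - M θ| := by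
          have := abs_sub_le (Mn n θ ω) (Mn n (e q) ω) (M θ)
          have h4 := abs_sub_le (Mn n (e q) ω) (M (e q)) (M θ)
          linarith
      _ ≤ t.sup' ht (fun q => |Mn n (e q) ω - M (e q)|)
          + ((∑ i ∈ Finset.range n, (|(X i ω).1| + K)) / n + c) * δ := by
          have : ((∑ i ∈ Finset.range n, (|(X i ω).1| + K)) / n + c) * δ
              = ((∑ i ∈ Finset.range n, (|(X i ω).1| + K)) / n) * δ + c * δ := by ring
          linarith
  -- a.e. events
  have hγae : ∀ᵐ ω ∂P, ∀ i, (X i ω).2 ∈ Set.Icc (0:ℝ) 1 := by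
    rw [ae_all_iff]
    intro i
    have hms : MeasurableSet {p : ℝ × ℝ | p.2 ∈ Set.Icc (0:ℝ) 1} :=
      measurable_snd measurableSet_Icc
    exact (ae_map_iff (hXm i).aemeasurable hms).mp (by rw [hdist i]; exact haeγ)
  have hLLNQ : ∀ᵐ ω ∂P, ∀ q : ℚ,
      Tendsto (fun n : ℕ => (∑ i ∈ Finset.range n, mFun (e q) (X i ω)) / n)
        atTop (𝓝 (M (e q))) :=
    ae_all_iff.mpr fun q => hLLN (e q) (he_mem q)
  -- nonnegativity of the sup
  have hS0 : ∀ (n : ℕ) (ω : Ω), 0 ≤ ⨆ θ : Set.Icc (-K) K, |Mn n θ ω - M θ| :=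
    fun n ω => Real.iSup_nonneg fun θ => abs_nonneg _
  -- a.e. uniform convergence
  have haeS : ∀ᵐ ω ∂P, Tendsto
      (fun n : ℕ => ⨆ θ : Set.Icc (-K) K, |Mn n θ ω - M θ|) atTop (𝓝 0) := by
    filter_upwards [hγae, hLLNQ, hLLNc] with ω hγω hQω hLω
    rw [Metric.tendsto_atTop]
    intro ε' hε'
    have hd4 : (0:ℝ) < 4 * (c + 1) := by linarith
    set δ := ε' / (4 * (c + 1)) with hδdef
    have hδ : 0 < δ := div_pos hε' hd4
    obtain ⟨t, ht, hcovt⟩ := hcov δ hδ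
    have hev1 : ∀ᶠ n in atTop, ∀ q ∈ t, |Mn n (e q) ω - M (e q)| < ε' / 4 := by
      rw [eventually_all_finset]
      intro q hq
      have h2 : Tendsto (fun n => Mn n (e q) ω) atTop (𝓝 (M (e q))) := by
        simpa only [hMn] using hQω q
      obtain ⟨N, hN⟩ := Metric.tendsto_atTop.mp h2 (ε' / 4) (by linarith)
      exact eventually_atTop.mpr ⟨N, fun n hn => by
        have := hN n hn; rwa [Real.dist_eq] at this⟩
    have hev2 : ∀ᶠ n in atTop,
        (∑ i ∈ Finset.range n, (|(X i ω).1| + K)) / n < c + 1 := by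
      obtain ⟨N, hN⟩ := Metric.tendsto_atTop.mp hLω 1 one_pos
      refine eventually_atTop.mpr ⟨N, fun n hn => ?_⟩
      have := hN n hn
      rw [Real.dist_eq] at this
      have := abs_lt.mp this
      linarith [this.2]
    obtain ⟨N, hN⟩ := eventually_atTop.mp (hev1.and hev2)
    refine ⟨N, fun n hn => ?_⟩
    obtain ⟨ha, hb⟩ := hN n hn
    have hsup : (⨆ θ : Set.Icc (-K) K, |Mn n θ ω - M θ|)
        ≤ t.sup' ht (fun q => |Mn n (e q) ω - M (e q)|)
          + ((∑ i ∈ Finset.range n, (|(X i ω).1| + K)) / n + c) * δ :=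
      ciSup_le fun θ => key ω hγω n δ hδ t ht hcovt θ θ.2
    have hsup' : t.sup' ht (fun q => |Mn n (e q) ω - M (e q)|) < ε' / 4 :=
      (Finset.sup'_lt_iff ht).mpr ha
    have hmul : ((∑ i ∈ Finset.range n, (|(X i ω).1| + K)) / n + c) * δ ≤ ε' / 2 := by
      have h1 : (∑ i ∈ Finset.range n, (|(X i ω).1| + K)) / n + c ≤ 2 * c + 1 := by
        linarith
      calc ((∑ i ∈ Finset.range n, (|(X i ω).1| + K)) / n + c) * δ
          ≤ (2 * c + 1) * δ := mul_le_mul_of_nonneg_right h1 hδ.le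
        _ ≤ ε' / 2 := by
            rw [hδdef, mul_comm, div_mul_eq_mul_div, div_le_div_iff₀ hd4 two_pos]
            nlinarith
    rw [Real.dist_eq, sub_zero, abs_of_nonneg (hS0 n ω)]
    linarith
  -- a.e. measurability of the sup
  have hMnmeas : ∀ (n : ℕ) (θ : ℝ), Measurable fun ω => |Mn n θ ω - M θ| := by
    intro n θ
    have h1 : (fun ω => Mn n θ ω) = fun ω => (∑ i ∈ Finset.range n, mFun θ (X i ω)) / n :=
      funext fun ω => hMn n θ ω
    have h2 : Measurable fun ω => (∑ i ∈ Finset.range n, mFun θ (X i ω)) / n :=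
      (Finset.measurable_sum _ fun i _ => (measurable_mFun θ).comp (hXm i)).div_const _
    exact (((h1 ▸ h2).sub_const (M θ)).abs)
  have hSmeas : ∀ n : ℕ, AEMeasurable
      (fun ω => ⨆ θ : Set.Icc (-K) K, |Mn n θ ω - M θ|) P := by
    intro n
    choose tk htk hcovk using fun k : ℕ => hcov (1 / ((k:ℝ) + 1)) (by positivity)
    have hgm : ∀ k : ℕ, Measurable fun ω =>
        (tk k).sup' (htk k) (fun q => |Mn n (e q) ω - M (e q)|) :=
      fun k => by
        have h := Finset.measurable_sup' (htk k) (fun q (_ : q ∈ tk k) => hMnmeas n (e q))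
        have heq : (fun ω => (tk k).sup' (htk k) fun q => |Mn n (e q) ω - M (e q)|)
            = (tk k).sup' (htk k) (fun q ω => |Mn n (e q) ω - M (e q)|) := by
          ext ω
          rw [Finset.sup'_apply]
        rw [heq]
        exact h
    apply aemeasurable_of_tendsto_metrizable_ae atTop (fun k => (hgm k).aemeasurable)
    filter_upwards [hγae] with ω hγω
    have hub : ∀ k : ℕ, (⨆ θ : Set.Icc (-K) K, |Mn n θ ω - M θ|)
        ≤ (tk k).sup' (htk k) (fun q => |Mn n (e q) ω - M (e q)|)
          + ((∑ i ∈ Finset.range n, (|(X i ω).1| + K)) / n + c) * (1 / ((k:ℝ) + 1)) :=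
      fun k => ciSup_le fun θ =>
        key ω hγω n _ (by positivity) (tk k) (htk k) (hcovk k) θ θ.2
    have hlb : ∀ k : ℕ, (tk k).sup' (htk k) (fun q => |Mn n (e q) ω - M (e q)|)
        ≤ ⨆ θ : Set.Icc (-K) K, |Mn n θ ω - M θ| := by
      intro k
      apply Finset.sup'_le
      intro q hq
      have hbdd : BddAbove (Set.range fun θ : Set.Icc (-K) K => |Mn n θ ω - M θ|) := by
        refine ⟨(tk k).sup' (htk k) (fun q => |Mn n (e q) ω - M (e q)|)
          + ((∑ i ∈ Finset.range n, (|(X i ω).1| + K)) / n + c) * (1 / ((k:ℝ) + 1)), ?_⟩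
        rintro x ⟨θ, rfl⟩
        exact key ω hγω n _ (by positivity) (tk k) (htk k) (hcovk k) θ θ.2
      exact le_ciSup hbdd ⟨e q, he_mem q⟩
    have hzero : Tendsto (fun k : ℕ =>
        (⨆ θ : Set.Icc (-K) K, |Mn n θ ω - M θ|)
          - ((∑ i ∈ Finset.range n, (|(X i ω).1| + K)) / n + c) * (1 / ((k:ℝ) + 1)))
        atTop (𝓝 (⨆ θ : Set.Icc (-K) K, |Mn n θ ω - M θ|)) := by
      have h1 := tendsto_one_div_add_atTop_nhds_zero_nat.const_mul
        ((∑ i ∈ Finset.range n, (|(X i ω).1| + K)) / n + c)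
      simpa using tendsto_const_nhds.sub h1
    exact tendsto_of_tendsto_of_tendsto_of_le_of_le hzero tendsto_const_nhds
      (fun k => by linarith [hub k]) (fun k => hlb k)
  -- conclude via convergence in measure
  have hTIM : TendstoInMeasure P
      (fun n ω => ⨆ θ : Set.Icc (-K) K, |Mn n θ ω - M θ|) atTop (fun _ => (0:ℝ)) :=
    tendstoInMeasure_of_tendsto_ae
      (fun n => (hSmeas n).aestronglyMeasurable) haeS
  intro ε hε
  have h2 := hTIM (ENNReal.ofReal ε) (by simpa using hε)
  have h3 := (ENNReal.tendsto_toReal (a := (0 : ENNReal)) (by simp)).comp h2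
  rw [ENNReal.toReal_zero] at h3
  have hsets : ∀ n : ℕ, {ω | ENNReal.ofReal ε ≤ edist
      (⨆ θ : Set.Icc (-K) K, |Mn n θ ω - M θ|) ((fun _ => (0:ℝ)) ω)}
      = {ω | ε ≤ ⨆ θ : Set.Icc (-K) K, |Mn n θ ω - M θ|} := by
    intro n
    ext ω
    rw [Set.mem_setOf_eq, Set.mem_setOf_eq, edist_dist, Real.dist_eq, sub_zero,
      abs_of_nonneg (hS0 n ω), ENNReal.ofReal_le_ofReal_iff (hS0 n ω)]
  simp_rw [Function.comp_def, hsets] at h3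
  exact h3
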